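/- For any complex numbers $a_1,\ldots,a_n$, the average over all sign vectors $\varepsilon \in \{-1,1\}^n$ of $|\sum_{j=1}^n \varepsilon_j a_j|$ is at least $\frac{1}{\sqrt{2}}\big(\sum_{j=1}^n |a_j|^2\big)^{1/2}$. -/

import Mathlib

open Finset

namespace KhinchinAux

variable {n : ℕ}

/-- sign of a boolean -/
def sgn (b : Bool) : ℝ := if b then 1 else -1

/-- Walsh character -/
def chi (S : Finset (Fin n)) (ε : Fin n → Bool) : ℝ := ∏ i ∈ S, sgn (ε i)

lemma sgn_mul_self (b : Bool) : sgn b * sgn b = 1 := by cases b <;> simp [sgn]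

lemma sgn_not (b : Bool) : sgn (!b) = - sgn b := by cases b <;> simp [sgn]

lemma sum_chi {S : Finset (Fin n)} (hS : S.Nonempty) :
    ∑ ε : Fin n → Bool, chi S ε = 0 := by
  have h : ∀ ε : Fin n → Bool, chi S ε =
      ∏ i : Fin n, (if i ∈ S then sgn (ε i) else 1) := by
    intro ε
    rw [Finset.prod_ite_mem, Finset.univ_inter]; rfl
  simp_rw [h]
  rw [← Fintype.piFinset_univ, ← Finset.prod_univ_sum
    (fun _ : Fin n => (Finset.univ : Finset Bool))
    (fun i b => if i ∈ S then sgn b else 1)]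
  obtain ⟨i₀, hi₀⟩ := hS
  apply Finset.prod_eq_zero (Finset.mem_univ i₀)
  simp [hi₀, sgn]

lemma sum_chi_mul (ε ε' : Fin n → Bool) :
    ∑ S : Finset (Fin n), chi S ε * chi S ε' =
      if ε = ε' then (2:ℝ)^n else 0 := by
  have h : ∀ S : Finset (Fin n), chi S ε * chi S ε' =
      ∏ i ∈ S, (sgn (ε i) * sgn (ε' i)) := by
    intro S; rw [chi, chi, Finset.prod_mul_distrib]
  simp_rw [h]
  have h2 : ∑ S : Finset (Fin n), ∏ i ∈ S, (sgn (ε i) * sgn (ε' i)) =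
      ∏ i : Fin n, (sgn (ε i) * sgn (ε' i) + 1) := by
    rw [Finset.prod_add]
    rw [← Finset.powerset_univ]
    apply Finset.sum_congr rfl
    intro S _
    simp
  rw [h2]
  by_cases hee : ε = ε'
  · subst hee
    simp [sgn_mul_self]
    norm_num
  · obtain ⟨i, hi⟩ : ∃ i, ε i ≠ ε' i := by
      by_contra hc
      push_neg at hc
      exact hee (funext hc)
    rw [if_neg hee]
    apply Finset.prod_eq_zero (Finset.mem_univ i)
    cases hb : ε i <;> cases hb' : ε' i <;> simp_all [sgn]


/-- unnormalized Fourier coefficient -/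
def coef (F : (Fin n → Bool) → ℝ) (S : Finset (Fin n)) : ℝ :=
  ∑ ε : Fin n → Bool, F ε * chi S ε

lemma parseval (F G : (Fin n → Bool) → ℝ) :
    ∑ S : Finset (Fin n), coef F S * coef G S =
      2^n * ∑ ε : Fin n → Bool, F ε * G ε := by
  unfold coef
  simp_rw [Finset.sum_mul_sum]
  rw [Finset.sum_comm]
  have h : ∀ ε : Fin n → Bool,
      ∑ S : Finset (Fin n), ∑ ε' : Fin n → Bool, (F ε * chi S ε) * (G ε' * chi S ε')
        = 2^n * (F ε * G ε) := by
    intro ε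
    rw [Finset.sum_comm]
    have h1 : ∀ ε' : Fin n → Bool,
        ∑ S : Finset (Fin n), (F ε * chi S ε) * (G ε' * chi S ε')
          = F ε * G ε' * (if ε = ε' then (2:ℝ)^n else 0) := by
      intro ε'
      rw [← sum_chi_mul ε ε', Finset.mul_sum]
      apply Finset.sum_congr rfl
      intro S _
      ring
    simp_rw [h1]
    rw [Finset.sum_congr rfl (fun ε' _ => by
      rw [show (F ε * G ε' * if ε = ε' then (2:ℝ)^n else 0)
        = (if ε = ε' then F ε * G ε' * 2^n else 0) from by split <;> simp])]
    rw [Finset.sum_ite_eq (Finset.univ) ε (fun ε' => F ε * G ε' * 2^n)]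
    simp [Finset.mem_univ]
    ring
  simp_rw [h]
  rw [← Finset.mul_sum]


/-- flip one coordinate -/
def flip (i : Fin n) (ε : Fin n → Bool) : Fin n → Bool :=
  Function.update ε i (!(ε i))

lemma flip_flip (i : Fin n) (ε : Fin n → Bool) : flip i (flip i ε) = ε := by
  funext j
  by_cases hj : j = i
  · subst hj; simp [flip]
  · simp [flip, Function.update_of_ne hj]

lemma flip_bijective (i : Fin n) : Function.Bijective (flip (n := n) i) :=
  Function.Involutive.bijective (flip_flip i)

lemma flip_apply_ne (i j : Fin n) (ε : Fin n → Bool) (h : j ≠ i) :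
    flip i ε j = ε j := by simp [flip, Function.update_of_ne h]

lemma flip_apply_self (i : Fin n) (ε : Fin n → Bool) : flip i ε i = !(ε i) := by
  simp [flip]

lemma chi_flip (i : Fin n) (S : Finset (Fin n)) (ε : Fin n → Bool) :
    chi S (flip i ε) = (if i ∈ S then -1 else 1) * chi S ε := by
  by_cases hi : i ∈ S
  · rw [if_pos hi, chi, chi, ← Finset.mul_prod_erase S _ hi,
      ← Finset.mul_prod_erase S (fun j => sgn (ε j)) hi]
    rw [flip_apply_self, sgn_not]
    rw [Finset.prod_congr rfl (fun j hj => by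
      rw [flip_apply_ne i j ε (Finset.ne_of_mem_erase hj)])]
    ring
  · rw [if_neg hi, one_mul, chi, chi]
    apply Finset.prod_congr rfl
    intro j hj
    rw [flip_apply_ne i j ε (fun hji => hi (hji ▸ hj))]

lemma coef_flip (F : (Fin n → Bool) → ℝ) (i : Fin n) (S : Finset (Fin n)) :
    coef (fun ε => F (flip i ε)) S = (if i ∈ S then -1 else 1) * coef F S := by
  unfold coef
  rw [Finset.mul_sum]
  apply Fintype.sum_bijective (flip i) (flip_bijective i)
  intro ε
  simp only [flip_flip, chi_flip]
  by_cases hi : i ∈ S <;> simp [hi]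

/-- flip all coordinates -/
def flipAll (ε : Fin n → Bool) : Fin n → Bool := fun j => !(ε j)

lemma flipAll_flipAll (ε : Fin n → Bool) : flipAll (flipAll ε) = ε := by
  funext j; simp [flipAll]

lemma chi_flipAll (S : Finset (Fin n)) (ε : Fin n → Bool) :
    chi S (flipAll ε) = (-1)^S.card * chi S ε := by
  unfold chi flipAll
  simp_rw [sgn_not]
  calc ∏ i ∈ S, -sgn (ε i) = ∏ i ∈ S, ((-1) * sgn (ε i)) := by
        apply Finset.prod_congr rfl; intros; ring
    _ = (∏ _i ∈ S, (-1 : ℝ)) * ∏ i ∈ S, sgn (ε i) := Finset.prod_mul_distrib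
    _ = (-1)^S.card * ∏ i ∈ S, sgn (ε i) := by rw [Finset.prod_const]

lemma coef_eq_zero_of_odd (F : (Fin n → Bool) → ℝ)
    (hF : ∀ ε, F (flipAll ε) = F ε) (S : Finset (Fin n)) (hS : ¬ Even S.card) :
    coef F S = 0 := by
  have h : coef F S = - coef F S := by
    unfold coef
    rw [← Finset.sum_neg_distrib]
    apply Fintype.sum_bijective flipAll (Function.Involutive.bijective flipAll_flipAll)
    intro ε
    rw [hF, chi_flipAll, Odd.neg_one_pow (Nat.not_even_iff_odd.mp hS)]
    ring
  linarith


/-! ### The specific function -/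

noncomputable def sgnC (b : Bool) : ℂ := if b then 1 else -1

lemma sgnC_not (b : Bool) : sgnC (!b) = - sgnC b := by cases b <;> simp [sgnC]

lemma conj_sgnC (b : Bool) : (starRingEnd ℂ) (sgnC b) = sgnC b := by
  cases b <;> simp [sgnC]

lemma sgnC_eq_coe (b : Bool) : sgnC b = ((sgn b : ℝ) : ℂ) := by
  cases b <;> simp [sgnC, sgn]

variable (a : Fin n → ℂ)

noncomputable def T (ε : Fin n → Bool) : ℂ := ∑ j, sgnC (ε j) * a j

noncomputable def Fv (ε : Fin n → Bool) : ℝ := ‖T a ε‖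

lemma T_flip (i : Fin n) (ε : Fin n → Bool) :
    T a (flip i ε) = T a ε - 2 * sgnC (ε i) * a i := by
  unfold T
  have h : ∀ j : Fin n, sgnC (flip i ε j) * a j =
      sgnC (ε j) * a j - (if j = i then 2 * sgnC (ε i) * a i else 0) := by
    intro j
    by_cases hj : j = i
    · subst hj
      rw [flip_apply_self, sgnC_not, if_pos rfl]
      ring
    · rw [flip_apply_ne i j ε hj, if_neg hj, sub_zero]
  simp_rw [h]
  rw [Finset.sum_sub_distrib, Finset.sum_ite_eq' Finset.univ i
    (fun _ => 2 * sgnC (ε i) * a i)]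
  simp

lemma sum_T_flip (ε : Fin n → Bool) :
    ∑ i, T a (flip i ε) = ((n:ℂ) - 2) * T a ε := by
  simp_rw [T_flip]
  rw [Finset.sum_sub_distrib, Finset.sum_const, Finset.card_univ, Fintype.card_fin,
    nsmul_eq_mul]
  have : ∑ i, 2 * sgnC (ε i) * a i = 2 * T a ε := by
    rw [T, Finset.mul_sum]
    apply Finset.sum_congr rfl
    intros; ring
  rw [this]
  ring

lemma pointwise (ε : Fin n → Bool) :
    ((n:ℝ) - 2) * Fv a ε ≤ ∑ i, Fv a (flip i ε) := by
  unfold Fv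
  calc ((n:ℝ) - 2) * ‖T a ε‖ ≤ |(n:ℝ) - 2| * ‖T a ε‖ := by
        apply mul_le_mul_of_nonneg_right (le_abs_self _) (norm_nonneg _)
    _ = ‖((n:ℂ) - 2) * T a ε‖ := by
        rw [norm_mul, show ((n:ℂ) - 2) = (((n:ℝ) - 2 : ℝ) : ℂ) from by push_cast; ring,
          Complex.norm_real, Real.norm_eq_abs]
    _ = ‖∑ i, T a (flip i ε)‖ := by rw [sum_T_flip]
    _ ≤ ∑ i, ‖T a (flip i ε)‖ := norm_sum_le _ _

lemma Fv_even (ε : Fin n → Bool) : Fv a (flipAll ε) = Fv a ε := by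
  unfold Fv
  have : T a (flipAll ε) = - T a ε := by
    unfold T flipAll
    rw [← Finset.sum_neg_distrib]
    apply Finset.sum_congr rfl
    intro j _
    rw [sgnC_not]
    ring
  rw [this, norm_neg]

lemma sum_ite_mem_card (S : Finset (Fin n)) :
    ∑ i : Fin n, (if i ∈ S then (-1:ℝ) else 1) = (n:ℝ) - 2 * S.card := by
  have h : ∀ i : Fin n, (if i ∈ S then (-1:ℝ) else 1) =
      1 - 2 * (if i ∈ S then (1:ℝ) else 0) := by
    intro i; split <;> ring
  simp_rw [h]
  rw [Finset.sum_sub_distrib, Finset.sum_const, ← Finset.mul_sum, Finset.sum_boole]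
  simp [Finset.filter_mem_eq_inter]

lemma key_ineq : ∑ S : Finset (Fin n), ((S.card : ℝ) - 1) * (coef (Fv a) S)^2 ≤ 0 := by
  set F := Fv a with hF
  set c := coef F with hc
  have h1 : ((n:ℝ) - 2) * ∑ S : Finset (Fin n), (c S)^2
      ≤ ∑ S : Finset (Fin n), ((n:ℝ) - 2 * S.card) * (c S)^2 := by
    have hA : ((n:ℝ) - 2) * ∑ S : Finset (Fin n), (c S)^2
        = 2^n * ∑ ε : Fin n → Bool, (((n:ℝ) - 2) * F ε) * F ε := by
      have := parseval F F
      simp_rw [← sq] at this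
      rw [hc, this]
      simp_rw [Finset.mul_sum]
      apply Finset.sum_congr rfl
      intros; ring
    have hB : ∑ S : Finset (Fin n), ((n:ℝ) - 2 * S.card) * (c S)^2
        = 2^n * ∑ ε : Fin n → Bool, (∑ i, F (flip i ε)) * F ε := by
      have hpar : ∀ i : Fin n, (∑ S : Finset (Fin n),
          (if i ∈ S then (-1:ℝ) else 1) * (c S)^2)
          = 2^n * ∑ ε : Fin n → Bool, F ε * F (flip i ε) := by
        intro i
        have := parseval F (fun ε => F (flip i ε))
        rw [Finset.sum_congr rfl (fun S _ => by rw [coef_flip F i S])] at this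
        rw [hc, ← this]
        apply Finset.sum_congr rfl
        intros; ring
      calc ∑ S : Finset (Fin n), ((n:ℝ) - 2 * S.card) * (c S)^2
          = ∑ S : Finset (Fin n), ∑ i : Fin n,
              (if i ∈ S then (-1:ℝ) else 1) * (c S)^2 := by
            apply Finset.sum_congr rfl
            intro S _
            rw [← Finset.sum_mul, sum_ite_mem_card]
        _ = ∑ i : Fin n, ∑ S : Finset (Fin n),
              (if i ∈ S then (-1:ℝ) else 1) * (c S)^2 := Finset.sum_comm
        _ = ∑ i : Fin n, 2^n * ∑ ε : Fin n → Bool, F ε * F (flip i ε) := by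
            apply Finset.sum_congr rfl
            intro i _
            exact hpar i
        _ = 2^n * ∑ ε : Fin n → Bool, (∑ i, F (flip i ε)) * F ε := by
            rw [← Finset.mul_sum]
            congr 1
            rw [Finset.sum_comm]
            apply Finset.sum_congr rfl
            intro ε _
            rw [Finset.sum_mul]
            apply Finset.sum_congr rfl
            intros; ring
    rw [hA, hB]
    apply mul_le_mul_of_nonneg_left _ (by positivity)
    apply Finset.sum_le_sum
    intro ε _
    exact mul_le_mul_of_nonneg_right (pointwise a ε) (norm_nonneg _)
  have h2 : ∑ S : Finset (Fin n), ((n:ℝ) - 2 * S.card) * (c S)^2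
      - ((n:ℝ) - 2) * ∑ S : Finset (Fin n), (c S)^2
      = (-2) * ∑ S : Finset (Fin n), ((S.card : ℝ) - 1) * (c S)^2 := by
    rw [Finset.mul_sum, Finset.mul_sum, ← Finset.sum_sub_distrib]
    apply Finset.sum_congr rfl
    intros; ring
  linarith

lemma sum_sq_coef_le : ∑ S : Finset (Fin n), (coef (Fv a) S)^2
    ≤ 2 * (coef (Fv a) ∅)^2 := by
  set c := coef (Fv a) with hc
  have hterm : ∀ S ∈ (Finset.univ : Finset (Finset (Fin n))).erase ∅,
      (c S)^2 ≤ ((S.card : ℝ) - 1) * (c S)^2 := by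
    intro S hS
    have hne : S ≠ ∅ := Finset.ne_of_mem_erase hS
    rcases Nat.lt_or_ge S.card 2 with hlt | hge
    · interval_cases h : S.card
      · exact absurd (Finset.card_eq_zero.mp h) hne
      · have : c S = 0 := coef_eq_zero_of_odd (Fv a) (Fv_even a) S (by rw [h]; simp)
        simp [this]
    · have h1 : (1:ℝ) ≤ (S.card : ℝ) - 1 := by
        have : (2:ℝ) ≤ (S.card : ℝ) := by exact_mod_cast hge
        linarith
      nlinarith [sq_nonneg (c S)]
  have hsum : ∑ S ∈ (Finset.univ : Finset (Finset (Fin n))).erase ∅, (c S)^2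
      ≤ (c ∅)^2 := by
    calc ∑ S ∈ (Finset.univ : Finset (Finset (Fin n))).erase ∅, (c S)^2
        ≤ ∑ S ∈ (Finset.univ : Finset (Finset (Fin n))).erase ∅,
            ((S.card : ℝ) - 1) * (c S)^2 := Finset.sum_le_sum hterm
      _ ≤ (c ∅)^2 := by
          have hk := key_ineq a
          rw [← Finset.add_sum_erase Finset.univ
            (fun S => ((S.card : ℝ) - 1) * (c S)^2) (Finset.mem_univ ∅)] at hk
          simp only [Finset.card_empty, Nat.cast_zero] at hk
          linarith
  rw [← Finset.add_sum_erase Finset.univ (fun S => (c S)^2) (Finset.mem_univ ∅)]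
  nlinarith

lemma coef_empty : coef (Fv a) ∅ = ∑ ε : Fin n → Bool, Fv a ε := by
  unfold coef chi
  simp

lemma sum_sgn_pair (j k : Fin n) :
    ∑ ε : Fin n → Bool, sgn (ε j) * sgn (ε k) = if j = k then (2:ℝ)^n else 0 := by
  by_cases hjk : j = k
  · subst hjk
    simp_rw [sgn_mul_self]
    rw [Finset.sum_const, Finset.card_univ]
    simp [if_pos rfl]
  · rw [if_neg hjk]
    have h : ∀ ε : Fin n → Bool, sgn (ε j) * sgn (ε k) = chi {j, k} ε := by
      intro ε
      rw [chi, Finset.prod_pair hjk]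
    simp_rw [h]
    exact sum_chi ⟨j, by simp⟩

lemma sum_Fv_sq : ∑ ε : Fin n → Bool, (Fv a ε)^2 = 2^n * ∑ j, ‖a j‖^2 := by
  have hC : ∑ ε : Fin n → Bool, (T a ε * (starRingEnd ℂ) (T a ε))
      = (2:ℂ)^n * ∑ j, (a j * (starRingEnd ℂ) (a j)) := by
    have hexp : ∀ ε : Fin n → Bool, T a ε * (starRingEnd ℂ) (T a ε)
        = ∑ j, ∑ k, (sgnC (ε j) * sgnC (ε k)) * (a j * (starRingEnd ℂ) (a k)) := by
      intro ε
      rw [T, map_sum, Finset.sum_mul_sum]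
      apply Finset.sum_congr rfl
      intro j _
      apply Finset.sum_congr rfl
      intro k _
      rw [map_mul, conj_sgnC]
      ring
    simp_rw [hexp]
    rw [Finset.sum_comm]
    have hj : ∀ j : Fin n, ∑ ε : Fin n → Bool, ∑ k,
        (sgnC (ε j) * sgnC (ε k)) * (a j * (starRingEnd ℂ) (a k))
        = (2:ℂ)^n * (a j * (starRingEnd ℂ) (a j)) := by
      intro j
      rw [Finset.sum_comm]
      have hk : ∀ k : Fin n, ∑ ε : Fin n → Bool,
          (sgnC (ε j) * sgnC (ε k)) * (a j * (starRingEnd ℂ) (a k))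
          = (if j = k then (2:ℂ)^n else 0) * (a j * (starRingEnd ℂ) (a k)) := by
        intro k
        rw [← Finset.sum_mul]
        congr 1
        have : ∑ ε : Fin n → Bool, sgnC (ε j) * sgnC (ε k)
            = ((∑ ε : Fin n → Bool, sgn (ε j) * sgn (ε k) : ℝ) : ℂ) := by
          push_cast
          apply Finset.sum_congr rfl
          intro ε _
          rw [sgnC_eq_coe, sgnC_eq_coe]
        rw [this, sum_sgn_pair]
        split <;> push_cast <;> simp
      simp_rw [hk]
      rw [Finset.sum_congr rfl (fun k _ => by
        rw [show ((if j = k then (2:ℂ)^n else 0) * (a j * (starRingEnd ℂ) (a k)))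
          = (if j = k then (2:ℂ)^n * (a j * (starRingEnd ℂ) (a k)) else 0) from by
            split <;> simp])]
      rw [Finset.sum_ite_eq Finset.univ j
        (fun k => (2:ℂ)^n * (a j * (starRingEnd ℂ) (a k)))]
      simp
    simp_rw [hj]
    rw [← Finset.mul_sum]
  have := congrArg Complex.re hC
  rw [Complex.re_sum] at this
  simp_rw [Complex.mul_conj] at this
  rw [show ((2:ℂ)^n * ∑ j, (Complex.normSq (a j) : ℂ))
      = (((2:ℝ)^n * ∑ j, Complex.normSq (a j) : ℝ) : ℂ) from by push_cast; ring,
    Complex.ofReal_re] at this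
  unfold Fv
  calc ∑ ε : Fin n → Bool, ‖T a ε‖^2
      = ∑ ε : Fin n → Bool, (Complex.normSq (T a ε) : ℂ).re := by
        apply Finset.sum_congr rfl
        intro ε _
        rw [Complex.ofReal_re, ← Complex.sq_norm]
    _ = (2:ℝ)^n * ∑ j, Complex.normSq (a j) := this
    _ = 2^n * ∑ j, ‖a j‖^2 := by
        congr 1
        apply Finset.sum_congr rfl
        intro j _
        rw [← Complex.sq_norm]

end KhinchinAux

theorem stmt1 (n : ℕ) (a : Fin n → ℂ) :
    (1 / Real.sqrt 2) * Real.sqrt (∑ j, ‖a j‖ ^ 2) ≤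
      (1 / 2 ^ n) * ∑ ε : Fin n → Bool, ‖∑ j, (if ε j then (1 : ℂ) else -1) * a j‖ := by
  classical
  have hFeq : ∀ ε : Fin n → Bool,
      ‖∑ j, (if ε j then (1 : ℂ) else -1) * a j‖ = KhinchinAux.Fv a ε := fun ε => rfl
  simp_rw [hFeq]
  set M := ∑ ε : Fin n → Bool, KhinchinAux.Fv a ε with hM
  set B := ∑ j, ‖a j‖ ^ 2 with hB
  have hM0 : 0 ≤ M := Finset.sum_nonneg (fun ε _ => norm_nonneg _)
  have hkey : (2:ℝ)^n * ((2:ℝ)^n * B) ≤ 2 * M^2 := by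
    have hp := KhinchinAux.parseval (KhinchinAux.Fv a) (KhinchinAux.Fv a)
    simp_rw [← sq] at hp
    have hle := KhinchinAux.sum_sq_coef_le a
    have hempty := KhinchinAux.coef_empty a
    have hsq := KhinchinAux.sum_Fv_sq a
    rw [hp, hsq, hempty] at hle
    rw [← hM, ← hB] at hle
    linarith
  have h2n : (0:ℝ) < 2^n := by positivity
  have hB' : B ≤ (Real.sqrt 2 * M / 2^n)^2 := by
    have h2 : Real.sqrt 2 ^ 2 = 2 := Real.sq_sqrt (by norm_num)
    rw [div_pow, mul_pow, h2, le_div_iff₀ (by positivity)]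
    calc B * ((2:ℝ)^n)^2 = (2:ℝ)^n * ((2:ℝ)^n * B) := by ring
      _ ≤ 2 * M^2 := hkey
  have hs : Real.sqrt B ≤ Real.sqrt 2 * M / 2^n := by
    have h := Real.sqrt_le_sqrt hB'
    rwa [Real.sqrt_sq (by positivity)] at h
  have hs2 : Real.sqrt 2 > 0 := Real.sqrt_pos.mpr (by norm_num)
  calc (1 / Real.sqrt 2) * Real.sqrt B
      ≤ (1 / Real.sqrt 2) * (Real.sqrt 2 * M / 2^n) := by
        apply mul_le_mul_of_nonneg_left hs (by positivity)
    _ = (1 / 2^n) * M := by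
        field_simp
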